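/- For every partition λ of n, the sum over all partitions of n of the reciprocals 1/z_λ equals 1: ∑_{λ ⊢ n} 1/z_λ = 1. -/
import Mathlib

open Multiset Finset

/-- `Z` of a multiset. -/
def Zm (s : Multiset ℕ) : ℕ :=
  ∏ k ∈ s.toFinset, k ^ s.count k * (s.count k).factorial

lemma Zm_cons (k : ℕ) (s : Multiset ℕ) :
    Zm (k ::ₘ s) = (k * (s.count k + 1)) * Zm s := by
  unfold Zm
  by_cases h : k ∈ s
  · have hk : k ∈ s.toFinset := Multiset.mem_toFinset.2 h
    have ht : (k ::ₘ s).toFinset = s.toFinset := by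
      rw [Multiset.toFinset_cons, Finset.insert_eq_self.2 hk]
    rw [ht, ← Finset.mul_prod_erase _ _ hk, ← Finset.mul_prod_erase _ _ hk]
    have hprod : ∏ j ∈ s.toFinset.erase k, j ^ (k ::ₘ s).count j * ((k ::ₘ s).count j).factorial
        = ∏ j ∈ s.toFinset.erase k, j ^ s.count j * (s.count j).factorial := by
      refine Finset.prod_congr rfl fun j hj => ?_
      rw [Multiset.count_cons_of_ne (Finset.ne_of_mem_erase hj)]
    rw [hprod, Multiset.count_cons_self, Nat.factorial_succ, pow_succ]
    ring
  · have hk : k ∉ s.toFinset := fun hh => h (Multiset.mem_toFinset.1 hh)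
    rw [Multiset.toFinset_cons, Finset.prod_insert hk]
    have hc : s.count k = 0 := Multiset.count_eq_zero.2 h
    have hprod : ∏ j ∈ s.toFinset, j ^ (k ::ₘ s).count j * ((k ::ₘ s).count j).factorial
        = ∏ j ∈ s.toFinset, j ^ s.count j * (s.count j).factorial := by
      refine Finset.prod_congr rfl fun j hj => ?_
      rw [Multiset.count_cons_of_ne]
      exact fun hjk => hk (hjk ▸ hj)
    rw [hprod, Multiset.count_cons_self, hc, Nat.factorial_one, pow_one]

lemma Zm_pos {s : Multiset ℕ} (hs : ∀ x ∈ s, 0 < x) : 0 < Zm s := by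
  refine Finset.prod_pos fun k hk => ?_
  have := hs k (Multiset.mem_toFinset.1 hk)
  positivity

/-- if `k ∈ s` with all elements positive, then `Zm s = k * count k s * Zm (s.erase k)`. -/
lemma Zm_erase {k : ℕ} {s : Multiset ℕ} (hk : k ∈ s) :
    Zm s = (k * s.count k) * Zm (s.erase k) := by
  conv_lhs => rw [← Multiset.cons_erase hk]
  rw [Zm_cons]
  congr 2
  rw [Multiset.count_erase_self]
  have : 1 ≤ s.count k := Multiset.one_le_count_iff_mem.2 hk
  omega

/-- The fiber bijection: partitions of `n` containing `k` correspond to partitions of `n-k`. -/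
lemma fiber_sum (n k : ℕ) (hk1 : 1 ≤ k) (hkn : k ≤ n) :
    ∑ p ∈ Finset.univ.filter (fun p : n.Partition => k ∈ p.parts),
        (1 : ℚ) / (Zm (p.parts.erase k) : ℚ)
      = ∑ μ : (n - k).Partition, (1 : ℚ) / (Zm μ.parts : ℚ) := by
  refine Finset.sum_bij'
    (i := fun p hp => (⟨p.parts.erase k,
        fun hi => p.parts_pos (Multiset.mem_of_mem_erase hi), ?_⟩ : (n - k).Partition))
    (j := fun μ _ => (⟨k ::ₘ μ.parts, fun hi => ?_, ?_⟩ : n.Partition))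
    ?_ ?_ ?_ ?_ ?_
  · -- erase sums to n - k
    have hkp : k ∈ p.parts := (Finset.mem_filter.1 hp).2
    have h1 : k + (p.parts.erase k).sum = p.parts.sum := by
      rw [← Multiset.sum_cons, Multiset.cons_erase hkp]
    have h2 := p.parts_sum
    omega
  · -- positivity for cons
    rcases Multiset.mem_cons.1 hi with rfl | h
    · omega
    · exact μ.parts_pos h
  · -- cons sums to n
    rw [Multiset.sum_cons, μ.parts_sum]
    omega
  · intro p hp
    exact Finset.mem_univ _
  · intro μ hμ
    simp only [Finset.mem_filter, Finset.mem_univ, true_and]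
    exact Multiset.mem_cons_self _ _
  · intro p hp
    have hkp : k ∈ p.parts := (Finset.mem_filter.1 hp).2
    exact Nat.Partition.ext (Multiset.cons_erase hkp)
  · intro μ hμ
    exact Nat.Partition.ext (Multiset.erase_cons_head _ _)
  · intro p hp
    rfl

lemma key : ∀ n : ℕ, ∑ p : n.Partition, (1 : ℚ) / (Zm p.parts : ℚ) = 1 := by
  intro n
  induction n using Nat.strong_induction_on with
  | _ n ih =>
  rcases Nat.eq_zero_or_pos n with rfl | hn
  · rw [Fintype.sum_unique]
    have h0 : (default : Nat.Partition 0).parts = 0 := by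
      by_contra h
      obtain ⟨a, ha⟩ := Multiset.exists_mem_of_ne_zero h
      have h1 := (default : Nat.Partition 0).parts_pos ha
      have h2 : a ≤ (default : Nat.Partition 0).parts.sum :=
        Multiset.single_le_sum (fun x _ => Nat.zero_le x) _ ha
      have h3 := (default : Nat.Partition 0).parts_sum
      omega
    rw [h0]
    simp [Zm]
  have hZpos : ∀ (s : Multiset ℕ), (∀ x ∈ s, 0 < x) → (0 : ℚ) < (Zm s : ℚ) := fun s hs => by
    exact_mod_cast Zm_pos hs
  -- the sum of each partition's parts, expressed over the toFinset
  have hsum : ∀ p : n.Partition, ∑ k ∈ p.parts.toFinset, p.parts.count k * k = n := by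
    intro p
    have h' : p.parts.sum = ∑ x ∈ p.parts.toFinset, p.parts.count x * x := by
      simpa using Finset.sum_multiset_map_count p.parts (id : ℕ → ℕ)
    rw [← h']
    exact p.parts_sum
  have htf : ∀ p : n.Partition, p.parts.toFinset = (Finset.Icc 1 n).filter (· ∈ p.parts) := by
    intro p
    ext k
    simp only [Multiset.mem_toFinset, Finset.mem_filter, Finset.mem_Icc]
    constructor
    · intro hk
      refine ⟨⟨p.parts_pos hk, ?_⟩, hk⟩
      have : k ≤ p.parts.sum := Multiset.single_le_sum (fun x _ => Nat.zero_le x) _ hk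
      rwa [p.parts_sum] at this
    · exact fun h => h.2
  have step1 : (n : ℚ) * ∑ p : n.Partition, (1 : ℚ) / (Zm p.parts : ℚ)
      = ∑ p : n.Partition, ∑ k ∈ p.parts.toFinset,
          ((k : ℚ) * (p.parts.count k : ℚ)) / (Zm p.parts : ℚ) := by
    rw [Finset.mul_sum]
    refine Finset.sum_congr rfl fun p _ => ?_
    rw [← Finset.sum_div, mul_one_div]
    congr 1
    have hc : (n : ℚ) = ((∑ k ∈ p.parts.toFinset, p.parts.count k * k : ℕ) : ℚ) := by
      exact_mod_cast (hsum p).symm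
    rw [hc]
    push_cast
    exact Finset.sum_congr rfl fun k _ => (mul_comm _ _)
  have step2 : ∑ p : n.Partition, ∑ k ∈ p.parts.toFinset,
          ((k : ℚ) * (p.parts.count k : ℚ)) / (Zm p.parts : ℚ)
      = ∑ k ∈ Finset.Icc 1 n, ∑ p ∈ Finset.univ.filter (fun p : n.Partition => k ∈ p.parts),
          (1 : ℚ) / (Zm (p.parts.erase k) : ℚ) := by
    have e1 : ∀ p : n.Partition, ∑ k ∈ p.parts.toFinset,
          ((k : ℚ) * (p.parts.count k : ℚ)) / (Zm p.parts : ℚ)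
        = ∑ k ∈ Finset.Icc 1 n, if k ∈ p.parts then
            ((k : ℚ) * (p.parts.count k : ℚ)) / (Zm p.parts : ℚ) else 0 := by
      intro p
      rw [htf p, Finset.sum_filter]
    simp_rw [e1]
    rw [Finset.sum_comm]
    refine Finset.sum_congr rfl fun k hk => ?_
    rw [← Finset.sum_filter]
    refine Finset.sum_congr rfl fun p hp => ?_
    have hkp : k ∈ p.parts := (Finset.mem_filter.1 hp).2
    rw [Zm_erase hkp]
    have hne : ((k : ℚ) * (p.parts.count k : ℚ)) ≠ 0 := by
      have h1 : 0 < k := p.parts_pos hkp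
      have h2 : 0 < p.parts.count k := Multiset.count_pos.2 hkp
      positivity
    push_cast
    rw [div_eq_div_iff]
    · ring
    · have := hZpos (p.parts.erase k) (fun x hx => p.parts_pos (Multiset.mem_of_mem_erase hx))
      positivity
    · have := hZpos (p.parts.erase k) (fun x hx => p.parts_pos (Multiset.mem_of_mem_erase hx))
      positivity
  have step3 : ∑ k ∈ Finset.Icc 1 n, ∑ p ∈ Finset.univ.filter
        (fun p : n.Partition => k ∈ p.parts), (1 : ℚ) / (Zm (p.parts.erase k) : ℚ)
      = (n : ℚ) := by
    have : ∀ k ∈ Finset.Icc 1 n, ∑ p ∈ Finset.univ.filter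
        (fun p : n.Partition => k ∈ p.parts), (1 : ℚ) / (Zm (p.parts.erase k) : ℚ) = 1 := by
      intro k hk
      rw [Finset.mem_Icc] at hk
      rw [fiber_sum n k hk.1 hk.2]
      exact ih (n - k) (by omega)
    rw [Finset.sum_congr rfl this, Finset.sum_const, Nat.card_Icc]
    simp
  have hfinal : (n : ℚ) * ∑ p : n.Partition, (1 : ℚ) / (Zm p.parts : ℚ) = (n : ℚ) := by
    rw [step1, step2, step3]
  have hn' : (n : ℚ) ≠ 0 := Nat.cast_ne_zero.2 (by omega)
  exact mul_left_cancel₀ hn' (by rw [hfinal, mul_one])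

/-- The invariant `z_λ = ∏_k k^{m_k(λ)}·m_k(λ)!` of a partition. -/
def zPart {n : ℕ} (p : n.Partition) : ℕ :=
  ∏ k ∈ p.parts.toFinset, k ^ p.parts.count k * (p.parts.count k).factorial

/-- Sylvester: for a positive integer `n`, `∑_{λ ⊢ n} 1/z_λ = 1`. -/
theorem sum_inv_zPart (n : ℕ) (hn : 1 ≤ n) :
    ∑ p : n.Partition, (1 : ℚ) / (zPart p : ℚ) = 1 := by
  have : ∀ p : n.Partition, zPart p = Zm p.parts := fun p => rfl
  simp only [this]
  exact key n
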